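/- Let V be a complex vector space, T : V → V a linear map, and k a positive integer. Consider the subspace W = {m ∈ V : T^k m = m and ∑_{j=0}^{k−1} T^j m = 0}. Then id − T maps W into W, and the restriction of id − T to W is a linear bijection of W onto itself. -/
import Mathlib

private lemma tele_sum {V : Type*} [AddCommGroup V] [Module ℂ V] (f : ℕ → V) (k : ℕ) :
    ∑ j ∈ Finset.range k, (-(j : ℂ)) • (f j - f (j + 1)) =
      f 0 - ∑ j ∈ Finset.range k, f j + ((k : ℂ) - 1) • f k := by
  induction k with
  | zero => simp [sub_smul]
  | succ n ih =>
      rw [Finset.sum_range_succ, ih, Finset.sum_range_succ]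
      push_cast
      module

/-- Let `V` be a complex vector space, `T : V → V` linear and `k > 0`. On the subspace
`W = {m | T^k m = m ∧ ∑_{j<k} T^j m = 0}`, the map `id − T` maps `W` into `W` and restricts
to a bijection of `W` onto itself. -/
theorem id_sub_bijOn_kernel_of_average
    {V : Type*} [AddCommGroup V] [Module ℂ V] (T : V →ₗ[ℂ] V) (k : ℕ) (hk : 0 < k) :
    Set.MapsTo ((LinearMap.id - T : V →ₗ[ℂ] V))
        {m : V | (T ^ k) m = m ∧ ∑ j ∈ Finset.range k, (T ^ j) m = 0}
        {m : V | (T ^ k) m = m ∧ ∑ j ∈ Finset.range k, (T ^ j) m = 0} ∧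
      Set.BijOn ((LinearMap.id - T : V →ₗ[ℂ] V))
        {m : V | (T ^ k) m = m ∧ ∑ j ∈ Finset.range k, (T ^ j) m = 0}
        {m : V | (T ^ k) m = m ∧ ∑ j ∈ Finset.range k, (T ^ j) m = 0} := by
  have hkC : (k : ℂ) ≠ 0 := Nat.cast_ne_zero.mpr hk.ne'
  have comm : ∀ (a b : ℕ) (x : V), (T ^ a) ((T ^ b) x) = (T ^ b) ((T ^ a) x) := by
    intro a b x
    rw [← Module.End.mul_apply, ← Module.End.mul_apply, ← pow_add, ← pow_add, Nat.add_comm]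
  have hsucc : ∀ (j : ℕ) (x : V), T ((T ^ j) x) = (T ^ (j + 1)) x := by
    intro j x
    rw [pow_succ', Module.End.mul_apply]
  have hmaps : Set.MapsTo ((LinearMap.id - T : V →ₗ[ℂ] V))
      {m : V | (T ^ k) m = m ∧ ∑ j ∈ Finset.range k, (T ^ j) m = 0}
      {m : V | (T ^ k) m = m ∧ ∑ j ∈ Finset.range k, (T ^ j) m = 0} := by
    rintro m ⟨h1, h2⟩
    have hTk : (T ^ k) (T m) = T m := by
      have := comm k 1 m
      simp only [pow_one] at this
      rw [this, h1]
    constructor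
    · simp only [LinearMap.sub_apply, LinearMap.id_apply, map_sub, h1, hTk]
    · simp only [LinearMap.sub_apply, LinearMap.id_apply, map_sub, Finset.sum_sub_distrib, h2]
      have : ∑ j ∈ Finset.range k, (T ^ j) (T m) = T (∑ j ∈ Finset.range k, (T ^ j) m) := by
        rw [map_sum]
        refine Finset.sum_congr rfl fun j _ => ?_
        have := comm 1 j m
        simpa only [pow_one] using this.symm
      rw [this, h2, map_zero, sub_zero]
  refine ⟨hmaps, hmaps, ?_, ?_⟩
  · -- injective on W
    rintro a ⟨ha1, ha2⟩ b ⟨hb1, hb2⟩ hab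
    simp only [LinearMap.sub_apply, LinearMap.id_apply] at hab
    set d := a - b with hd
    have hTd : T d = d := by
      have : a - T a = b - T b := hab
      simp only [hd, map_sub]
      abel_nf
      linear_combination (norm := abel) -this
    have hTjd : ∀ j : ℕ, (T ^ j) d = d := by
      intro j
      induction j with
      | zero => simp
      | succ n ih => rw [← hsucc, ih, hTd]
    have hsum : ∑ j ∈ Finset.range k, (T ^ j) d = 0 := by
      simp only [hd, map_sub, Finset.sum_sub_distrib, ha2, hb2, sub_zero]
    have : (k : ℂ) • d = 0 := by
      have : ∑ j ∈ Finset.range k, (T ^ j) d = k • d := by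
        rw [Finset.sum_congr rfl fun j _ => hTjd j, Finset.sum_const, Finset.card_range]
      rw [this] at hsum
      rwa [Nat.cast_smul_eq_nsmul]
    have hd0 : d = 0 := by
      rcases smul_eq_zero.mp this with h | h
      · exact absurd h hkC
      · exact h
    exact sub_eq_zero.mp hd0
  · -- surjective onto W
    rintro m ⟨h1, h2⟩
    set n₀ : V := ∑ j ∈ Finset.range k, (-(j : ℂ)) • (T ^ j) m with hn₀
    set n : V := (k : ℂ)⁻¹ • n₀ with hn
    have hTn₀ : T n₀ = ∑ j ∈ Finset.range k, (-(j : ℂ)) • (T ^ (j + 1)) m := by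
      rw [hn₀, map_sum]
      exact Finset.sum_congr rfl fun j _ => by rw [map_smul, hsucc]
    have key : n₀ - T n₀ = (k : ℂ) • m := by
      rw [hTn₀, hn₀, ← Finset.sum_sub_distrib]
      have : ∀ j ∈ Finset.range k,
          (-(j : ℂ)) • (T ^ j) m - (-(j : ℂ)) • (T ^ (j + 1)) m
            = (-(j : ℂ)) • ((T ^ j) m - (T ^ (j + 1)) m) := fun j _ => (smul_sub _ _ _).symm
      rw [Finset.sum_congr rfl this, tele_sum (fun j => (T ^ j) m) k]
      simp only [pow_zero, Module.End.one_apply, h1, h2, sub_zero, sub_smul, one_smul]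
      abel
    refine ⟨n, ⟨?_, ?_⟩, ?_⟩
    · rw [hn, map_smul, hn₀, map_sum]
      congr 1
      refine Finset.sum_congr rfl fun j _ => ?_
      rw [map_smul, comm, h1]
    · have : ∀ i : ℕ, (T ^ i) n = (k : ℂ)⁻¹ • ∑ j ∈ Finset.range k,
          (-(j : ℂ)) • (T ^ j) ((T ^ i) m) := by
        intro i
        rw [hn, map_smul, hn₀, map_sum]
        congr 1
        exact Finset.sum_congr rfl fun j _ => by rw [map_smul, comm]
      calc ∑ i ∈ Finset.range k, (T ^ i) n
          = (k : ℂ)⁻¹ • ∑ j ∈ Finset.range k,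
              (-(j : ℂ)) • (T ^ j) (∑ i ∈ Finset.range k, (T ^ i) m) := by
            rw [Finset.sum_congr rfl fun i _ => this i, ← Finset.smul_sum,
              Finset.sum_comm]
            congr 1
            refine Finset.sum_congr rfl fun j _ => ?_
            rw [map_sum, Finset.smul_sum]
        _ = 0 := by rw [h2]; simp
    · simp only [LinearMap.sub_apply, LinearMap.id_apply]
      rw [hn, map_smul, ← smul_sub, key, smul_smul, inv_mul_cancel₀ hkC, one_smul]
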